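/- Let α ∈ (1/2, 1), r₀ > 0, and let τ : [0, r₀] → ℝ be a continuous strictly positive probability density. Define L(r*) = (2α − 1)∫_{r*}^{r₀} (r − r*) τ(r) dr and R(r*) = (1 − α)(∫_0^{r*} (r + r*) τ(r) dr + ∫_{r*}^{r₀} 2 r* τ(r) dr). Then the equation L(r*) = R(r*) has a unique solution r*(α) ∈ (0, r₀); moreover L is continuous and strictly decreasing in r* on [0, r₀], and R is continuous and strictly increasing in r* on [0, r₀], with L(0) > 0 = R(0) and L(r₀) = 0 < R(r₀). -/

import Mathlib

open intervalIntegral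

/-- The spherical balancing equation `L(r*) = R(r*)` has a unique solution in `(0, r₀)`:
`L` is continuous and strictly decreasing, `R` continuous and strictly increasing, with
`L(0) > 0 = R(0)` and `L(r₀) = 0 < R(r₀)`. -/
theorem stmt6 (α r₀ : ℝ) (hα : α ∈ Set.Ioo (1/2 : ℝ) 1) (hr₀ : 0 < r₀)
    (τ : ℝ → ℝ) (hτc : ContinuousOn τ (Set.Icc 0 r₀))
    (hτpos : ∀ r ∈ Set.Icc (0:ℝ) r₀, 0 < τ r)
    (hτ1 : (∫ r in (0:ℝ)..r₀, τ r) = 1) :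
    ContinuousOn (fun rs => (2*α - 1) * ∫ r in rs..r₀, (r - rs) * τ r) (Set.Icc 0 r₀) ∧
    StrictAntiOn (fun rs => (2*α - 1) * ∫ r in rs..r₀, (r - rs) * τ r) (Set.Icc 0 r₀) ∧
    ContinuousOn (fun rs => (1 - α) *
      ((∫ r in (0:ℝ)..rs, (r + rs) * τ r) + ∫ r in rs..r₀, 2*rs*τ r)) (Set.Icc 0 r₀) ∧
    StrictMonoOn (fun rs => (1 - α) *
      ((∫ r in (0:ℝ)..rs, (r + rs) * τ r) + ∫ r in rs..r₀, 2*rs*τ r)) (Set.Icc 0 r₀) ∧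
    0 < (2*α - 1) * ∫ r in (0:ℝ)..r₀, (r - 0) * τ r ∧
    (1 - α) * ((∫ r in (0:ℝ)..(0:ℝ), (r + 0) * τ r) + ∫ r in (0:ℝ)..r₀, 2*0*τ r) = 0 ∧
    (2*α - 1) * (∫ r in r₀..r₀, (r - r₀) * τ r) = 0 ∧
    0 < (1 - α) * ((∫ r in (0:ℝ)..r₀, (r + r₀) * τ r) + ∫ r in r₀..r₀, 2*r₀*τ r) ∧
    (∃! rs, rs ∈ Set.Ioo 0 r₀ ∧
      (2*α - 1) * (∫ r in rs..r₀, (r - rs) * τ r) =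
      (1 - α) * ((∫ r in (0:ℝ)..rs, (r + rs) * τ r) + ∫ r in rs..r₀, 2*rs*τ r)) := by
  obtain ⟨hα1, hα2⟩ := hα
  have hα1' : 0 < 2*α - 1 := by linarith
  have hα2' : 0 < 1 - α := by linarith
  have h0mem : (0:ℝ) ∈ Set.Icc (0:ℝ) r₀ := ⟨le_rfl, hr₀.le⟩
  have hr₀mem : r₀ ∈ Set.Icc (0:ℝ) r₀ := ⟨hr₀.le, le_rfl⟩
  -- integrability helpers
  have hInt : ∀ (f : ℝ → ℝ), ContinuousOn f (Set.Icc 0 r₀) →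
      ∀ a ∈ Set.Icc (0:ℝ) r₀, ∀ b ∈ Set.Icc (0:ℝ) r₀,
      IntervalIntegrable f MeasureTheory.volume a b := by
    intro f hf a ha b hb
    exact (hf.mono (Set.uIcc_subset_Icc ha hb)).intervalIntegrable
  have hidτc : ContinuousOn (fun r => r * τ r) (Set.Icc 0 r₀) :=
    continuousOn_id.mul hτc
  have hτi := hInt τ hτc
  have hidτi := hInt (fun r => r * τ r) hidτc
  -- rewriting lemmas
  have hLrw : ∀ rs ∈ Set.Icc (0:ℝ) r₀, (∫ r in rs..r₀, (r - rs) * τ r) =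
      (∫ r in rs..r₀, r * τ r) - rs * ∫ r in rs..r₀, τ r := by
    intro rs hrs
    rw [← intervalIntegral.integral_const_mul,
      ← intervalIntegral.integral_sub (hidτi rs hrs r₀ hr₀mem)
        ((hτi rs hrs r₀ hr₀mem).const_mul rs)]
    congr 1; ext r; ring
  have hRrw1 : ∀ rs ∈ Set.Icc (0:ℝ) r₀, (∫ r in (0:ℝ)..rs, (r + rs) * τ r) =
      (∫ r in (0:ℝ)..rs, r * τ r) + rs * ∫ r in (0:ℝ)..rs, τ r := by
    intro rs hrs
    rw [← intervalIntegral.integral_const_mul,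
      ← intervalIntegral.integral_add (hidτi 0 h0mem rs hrs)
        ((hτi 0 h0mem rs hrs).const_mul rs)]
    congr 1; ext r; ring
  have hRrw2 : ∀ rs ∈ Set.Icc (0:ℝ) r₀, (∫ r in rs..r₀, 2*rs*τ r) =
      (2*rs) * ∫ r in rs..r₀, τ r := by
    intro rs hrs
    rw [← intervalIntegral.integral_const_mul]
  -- primitives
  set F : ℝ → ℝ := fun x => ∫ t in (0:ℝ)..x, t * τ t with hF
  set G : ℝ → ℝ := fun x => ∫ t in (0:ℝ)..x, τ t with hG
  have huIcc : Set.uIcc (0:ℝ) r₀ = Set.Icc 0 r₀ := Set.uIcc_of_le hr₀.le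
  have hFc : ContinuousOn F (Set.Icc 0 r₀) := by
    rw [← huIcc]
    exact intervalIntegral.continuousOn_primitive_interval
      (by rw [huIcc]; exact hidτc.integrableOn_compact isCompact_Icc)
  have hGc : ContinuousOn G (Set.Icc 0 r₀) := by
    rw [← huIcc]
    exact intervalIntegral.continuousOn_primitive_interval
      (by rw [huIcc]; exact hτc.integrableOn_compact isCompact_Icc)
  have hsub1 : ∀ rs ∈ Set.Icc (0:ℝ) r₀, (∫ r in rs..r₀, r * τ r) = F r₀ - F rs := by
    intro rs hrs
    rw [hF]
    rw [intervalIntegral.integral_interval_sub_left (hidτi 0 h0mem r₀ hr₀mem)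
      (hidτi 0 h0mem rs hrs)]
  have hsub2 : ∀ rs ∈ Set.Icc (0:ℝ) r₀, (∫ r in rs..r₀, τ r) = G r₀ - G rs := by
    intro rs hrs
    rw [hG]
    rw [intervalIntegral.integral_interval_sub_left (hτi 0 h0mem r₀ hr₀mem)
      (hτi 0 h0mem rs hrs)]
  -- continuity of L
  have hLc : ContinuousOn (fun rs => (2*α - 1) * ∫ r in rs..r₀, (r - rs) * τ r)
      (Set.Icc 0 r₀) := by
    apply ContinuousOn.congr
      (f := fun rs => (2*α - 1) * ((F r₀ - F rs) - rs * (G r₀ - G rs)))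
    · exact continuousOn_const.mul (((continuousOn_const.sub hFc).sub
        (continuousOn_id.mul (continuousOn_const.sub hGc))))
    · intro rs hrs
      simp only [hLrw rs hrs, hsub1 rs hrs, hsub2 rs hrs, hF, hG]
  -- continuity of R
  have hRc : ContinuousOn (fun rs => (1 - α) *
      ((∫ r in (0:ℝ)..rs, (r + rs) * τ r) + ∫ r in rs..r₀, 2*rs*τ r)) (Set.Icc 0 r₀) := by
    apply ContinuousOn.congr
      (f := fun rs => (1 - α) * ((F rs + rs * G rs) + (2*rs) * (G r₀ - G rs)))
    · exact continuousOn_const.mul (((hFc.add (continuousOn_id.mul hGc)).add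
        ((continuousOn_const.mul continuousOn_id).mul (continuousOn_const.sub hGc))))
    · intro rs hrs
      simp only [hRrw1 rs hrs, hRrw2 rs hrs, hsub2 rs hrs, hF, hG]
  -- strict antitonicity of L
  have hLanti : StrictAntiOn (fun rs => (2*α - 1) * ∫ r in rs..r₀, (r - rs) * τ r)
      (Set.Icc 0 r₀) := by
    intro a ha b hb hab
    simp only
    apply mul_lt_mul_of_pos_left _ hα1'
    have h1 : (∫ r in b..r₀, (r - b) * τ r) ≤ ∫ r in b..r₀, (r - a) * τ r := by
      apply intervalIntegral.integral_mono_on hb.2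
        (hInt _ ((continuousOn_id.sub continuousOn_const).mul hτc) b hb r₀ hr₀mem)
        (hInt _ ((continuousOn_id.sub continuousOn_const).mul hτc) b hb r₀ hr₀mem)
      intro x hx
      have hτx : 0 ≤ τ x := (hτpos x ⟨le_trans hb.1 hx.1, hx.2⟩).le
      show (x - b) * τ x ≤ (x - a) * τ x
      nlinarith [hx.1, hab]
    have h2 : 0 < ∫ r in a..b, (r - a) * τ r := by
      apply intervalIntegral.intervalIntegral_pos_of_pos_on
        (hInt _ ((continuousOn_id.sub continuousOn_const).mul hτc) a ha b hb)
        _ hab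
      intro x hx
      have hτx : 0 < τ x := hτpos x ⟨le_trans ha.1 hx.1.le, le_trans hx.2.le hb.2⟩
      have : 0 < x - a := by linarith [hx.1]
      show 0 < (x - a) * τ x
      positivity
    have h3 : (∫ r in a..b, (r - a) * τ r) + (∫ r in b..r₀, (r - a) * τ r)
        = ∫ r in a..r₀, (r - a) * τ r :=
      intervalIntegral.integral_add_adjacent_intervals
        (hInt _ ((continuousOn_id.sub continuousOn_const).mul hτc) a ha b hb)
        (hInt _ ((continuousOn_id.sub continuousOn_const).mul hτc) b hb r₀ hr₀mem)
    linarith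
  -- strict monotonicity of R
  have hRmono : StrictMonoOn (fun rs => (1 - α) *
      ((∫ r in (0:ℝ)..rs, (r + rs) * τ r) + ∫ r in rs..r₀, 2*rs*τ r)) (Set.Icc 0 r₀) := by
    intro a ha b hb hab
    simp only
    apply mul_lt_mul_of_pos_left _ hα2'
    rw [hRrw1 a ha, hRrw1 b hb, hRrw2 a ha, hRrw2 b hb]
    -- adjacent interval identities
    have e1 : (∫ r in (0:ℝ)..a, r * τ r) + (∫ r in a..b, r * τ r)
        = ∫ r in (0:ℝ)..b, r * τ r :=
      intervalIntegral.integral_add_adjacent_intervals (hidτi 0 h0mem a ha) (hidτi a ha b hb)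
    have e2 : (∫ r in (0:ℝ)..a, τ r) + (∫ r in a..b, τ r) = ∫ r in (0:ℝ)..b, τ r :=
      intervalIntegral.integral_add_adjacent_intervals (hτi 0 h0mem a ha) (hτi a ha b hb)
    have e3 : (∫ r in a..b, τ r) + (∫ r in b..r₀, τ r) = ∫ r in a..r₀, τ r :=
      intervalIntegral.integral_add_adjacent_intervals (hτi a ha b hb) (hτi b hb r₀ hr₀mem)
    have e4 : (∫ r in (0:ℝ)..b, τ r) + (∫ r in b..r₀, τ r) = 1 := by
      rw [intervalIntegral.integral_add_adjacent_intervals (hτi 0 h0mem b hb)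
        (hτi b hb r₀ hr₀mem), hτ1]
    have h4 : a * (∫ r in a..b, τ r) ≤ ∫ r in a..b, r * τ r := by
      rw [← intervalIntegral.integral_const_mul]
      apply intervalIntegral.integral_mono_on hab.le ((hτi a ha b hb).const_mul a)
        (hidτi a ha b hb)
      intro x hx
      have hτx : 0 ≤ τ x := (hτpos x ⟨le_trans ha.1 hx.1, le_trans hx.2 hb.2⟩).le
      nlinarith [hx.1]
    have h5 : 0 ≤ ∫ r in b..r₀, τ r := by
      apply intervalIntegral.integral_nonneg hb.2
      intro x hx
      exact (hτpos x ⟨le_trans hb.1 hx.1, hx.2⟩).le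
    have h6 : 0 ≤ ∫ r in (0:ℝ)..a, τ r := by
      apply intervalIntegral.integral_nonneg ha.1
      intro x hx
      exact (hτpos x ⟨hx.1, le_trans hx.2 ha.2⟩).le
    have hsum : (∫ r in (0:ℝ)..a, τ r) + (∫ r in a..b, τ r) + (∫ r in b..r₀, τ r) = 1 := by
      linarith
    have key : (b - a) * ((∫ r in (0:ℝ)..a, τ r) + (∫ r in a..b, τ r)
        + (∫ r in b..r₀, τ r)) = b - a := by
      rw [hsum, mul_one]
    have e3a : a * ((∫ r in a..b, τ r) + (∫ r in b..r₀, τ r)) = a * (∫ r in a..r₀, τ r) := by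
      rw [e3]
    have e2b : b * ((∫ r in (0:ℝ)..a, τ r) + (∫ r in a..b, τ r)) = b * (∫ r in (0:ℝ)..b, τ r) := by
      rw [e2]
    nlinarith [h4, key, e3a, e2b, mul_nonneg (sub_pos.2 hab).le h5,
      mul_nonneg (sub_pos.2 hab).le h6, sub_pos.2 hab]
  -- endpoint values
  have hL0 : 0 < (2*α - 1) * ∫ r in (0:ℝ)..r₀, (r - 0) * τ r := by
    apply mul_pos hα1'
    apply intervalIntegral.intervalIntegral_pos_of_pos_on
      (hInt _ ((continuousOn_id.sub continuousOn_const).mul hτc) 0 h0mem r₀ hr₀mem) _ hr₀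
    intro x hx
    have hτx : 0 < τ x := hτpos x ⟨hx.1.le, hx.2.le⟩
    have : 0 < x - 0 := by linarith [hx.1]
    show 0 < (x - 0) * τ x
    positivity
  have hR0 : (1 - α) * ((∫ r in (0:ℝ)..(0:ℝ), (r + 0) * τ r) + ∫ r in (0:ℝ)..r₀, 2*0*τ r)
      = 0 := by
    simp
  have hLr₀ : (2*α - 1) * (∫ r in r₀..r₀, (r - r₀) * τ r) = 0 := by
    simp
  have hRr₀ : 0 < (1 - α) * ((∫ r in (0:ℝ)..r₀, (r + r₀) * τ r) + ∫ r in r₀..r₀, 2*r₀*τ r) := by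
    apply mul_pos hα2'
    rw [intervalIntegral.integral_same, add_zero]
    apply intervalIntegral.intervalIntegral_pos_of_pos_on
      (hInt _ ((continuousOn_id.add continuousOn_const).mul hτc) 0 h0mem r₀ hr₀mem) _ hr₀
    intro x hx
    have hτx : 0 < τ x := hτpos x ⟨hx.1.le, hx.2.le⟩
    have : 0 < x + r₀ := by linarith [hx.1]
    show 0 < (x + r₀) * τ x
    positivity
  -- existence and uniqueness
  refine ⟨hLc, hLanti, hRc, hRmono, hL0, hR0, hLr₀, hRr₀, ?_⟩
  set L : ℝ → ℝ := fun rs => (2*α - 1) * ∫ r in rs..r₀, (r - rs) * τ r with hLdef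
  set R : ℝ → ℝ := fun rs => (1 - α) *
      ((∫ r in (0:ℝ)..rs, (r + rs) * τ r) + ∫ r in rs..r₀, 2*rs*τ r) with hRdef
  set H : ℝ → ℝ := fun rs => L rs - R rs with hHdef
  have hHc : ContinuousOn H (Set.Icc 0 r₀) := hLc.sub hRc
  have hHanti : StrictAntiOn H (Set.Icc 0 r₀) := by
    intro a ha b hb hab
    have := hLanti ha hb hab
    have := hRmono ha hb hab
    simp only [hHdef]
    linarith
  have hR0' : R 0 = 0 := hR0
  have hL0' : 0 < L 0 := hL0
  have hLr₀' : L r₀ = 0 := hLr₀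
  have hRr₀' : 0 < R r₀ := hRr₀
  have hH0 : 0 < H 0 := by
    have h : H 0 = L 0 - R 0 := rfl
    rw [h, hR0']; linarith
  have hHr₀ : H r₀ < 0 := by
    have h : H r₀ = L r₀ - R r₀ := rfl
    rw [h, hLr₀']; linarith
  have hmem : (0:ℝ) ∈ Set.Icc (H r₀) (H 0) := ⟨hHr₀.le, hH0.le⟩
  obtain ⟨c, hc, hHc0⟩ := intermediate_value_Icc' hr₀.le hHc hmem
  have hc0 : c ≠ 0 := by
    rintro rfl
    rw [hHc0] at hH0
    exact lt_irrefl 0 hH0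
  have hcr₀ : c ≠ r₀ := by
    rintro rfl
    rw [hHc0] at hHr₀
    exact lt_irrefl 0 hHr₀
  refine ⟨c, ⟨⟨lt_of_le_of_ne hc.1 (Ne.symm hc0), lt_of_le_of_ne hc.2 hcr₀⟩, ?_⟩, ?_⟩
  · have h : L c - R c = 0 := hHc0
    exact sub_eq_zero.mp h
  · rintro y ⟨hy, hyeq⟩
    have hyIcc : y ∈ Set.Icc (0:ℝ) r₀ := ⟨hy.1.le, hy.2.le⟩
    have hyeq' : L y = R y := hyeq
    have hHy : H y = 0 := sub_eq_zero_of_eq hyeq'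
    exact hHanti.injOn hyIcc hc (hHy.trans hHc0.symm)
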